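/- For the cycle C_n on n vertices (n ≥ 3): IC(C_n) = n if n ≤ 6; IC(C_n) = 5 if n = 7; and IC(C_n) = 6 if n ≥ 8. -/

import Mathlib

namespace ICNL

variable {V : Type*}

/-- `S` is a dominating set of `G`. -/
def Dominating (G : SimpleGraph V) (S : Set V) : Prop :=
  ∀ v : V, v ∈ S ∨ ∃ u ∈ S, G.Adj u v

/-- `S` is an independent set of `G`. -/
def IndepSet (G : SimpleGraph V) (S : Set V) : Prop :=
  ∀ ⦃u : V⦄, u ∈ S → ∀ ⦃v : V⦄, v ∈ S → ¬ G.Adj u v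

/-- `S` is an independent dominating set of `G`. -/
def IndepDom (G : SimpleGraph V) (S : Set V) : Prop :=
  IndepSet G S ∧ Dominating G S

/-- `A` and `B` form an independent coalition in `G`. -/
def ICCoalition (G : SimpleGraph V) (A B : Set V) : Prop :=
  Disjoint A B ∧ IndepSet G A ∧ IndepSet G B ∧
    ¬ IndepDom G A ∧ ¬ IndepDom G B ∧ IndepDom G (A ∪ B)

/-- `π` is a partition of the vertex set into nonempty classes. -/
def IsPartition (π : Finset (Finset V)) : Prop :=
  (∀ A ∈ π, A.Nonempty) ∧ ∀ v : V, ∃! A : Finset V, A ∈ π ∧ v ∈ A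

/-- `π` is an independent coalition partition of `G`. -/
def IsICPartition (G : SimpleGraph V) (π : Finset (Finset V)) : Prop :=
  IsPartition π ∧
    ∀ A ∈ π, (∃ v : V, (A : Set V) = {v} ∧ Dominating G (A : Set V)) ∨
      (¬ IndepDom G (A : Set V) ∧
        ∃ B ∈ π, B ≠ A ∧ ICCoalition G (A : Set V) (B : Set V))

/-- The independent coalition number: the maximum number of classes of an
ic-partition of `G`. -/
noncomputable def IC (G : SimpleGraph V) : ℕ :=
  sSup {k | ∃ π : Finset (Finset V), IsICPartition G π ∧ π.card = k}



open SimpleGraph Finset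
open scoped Fin.NatCast Fin.CommRing

set_option maxHeartbeats 1000000
set_option maxRecDepth 100000

/-- Nat-level characterization of cycle adjacency. -/
lemma adj_iff {n : ℕ} (hn : 3 ≤ n) {u v : Fin n} :
    (cycleGraph n).Adj u v ↔
      (u.val + 1 = v.val ∨ v.val + 1 = u.val ∨ (u.val = 0 ∧ v.val = n - 1) ∨
        (v.val = 0 ∧ u.val = n - 1)) := by
  rw [SimpleGraph.cycleGraph_adj']
  have h1 := Fin.coe_int_sub_eq_ite u v
  have h2 := Fin.coe_int_sub_eq_ite v u
  have hu := u.isLt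
  have hv := v.isLt
  constructor
  · rintro (h | h)
    · replace h : (((u - v).val : ℕ) : ℤ) = 1 := by exact_mod_cast h
      split_ifs at h1 with hc <;> rw [Fin.le_def] at hc <;> omega
    · replace h : (((v - u).val : ℕ) : ℤ) = 1 := by exact_mod_cast h
      split_ifs at h2 with hc <;> rw [Fin.le_def] at hc <;> omega
  · intro h
    rcases h with h | h | h | h
    · right
      have : (((v - u).val : ℕ) : ℤ) = 1 := by
        split_ifs at h2 with hc <;> rw [Fin.le_def] at hc <;> omega
      exact_mod_cast this
    · left
      have : (((u - v).val : ℕ) : ℤ) = 1 := by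
        split_ifs at h1 with hc <;> rw [Fin.le_def] at hc <;> omega
      exact_mod_cast this
    · left
      have : (((u - v).val : ℕ) : ℤ) = 1 := by
        split_ifs at h1 with hc <;> rw [Fin.le_def] at hc <;> omega
      exact_mod_cast this
    · right
      have : (((v - u).val : ℕ) : ℤ) = 1 := by
        split_ifs at h2 with hc <;> rw [Fin.le_def] at hc <;> omega
      exact_mod_cast this

lemma adj_succ {m : ℕ} (u : Fin (m + 3)) : (cycleGraph (m + 3)).Adj u (u + 1) := by
  rw [cycleGraph_adj]
  right
  ring

lemma adj_cases {m : ℕ} {u v : Fin (m + 3)} (h : (cycleGraph (m + 3)).Adj u v) :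
    v = u + 1 ∨ v = u - 1 := by
  rw [cycleGraph_adj] at h
  rcases h with h | h
  · right
    rw [sub_eq_iff_eq_add] at h
    rw [h]; ring
  · left
    rw [sub_eq_iff_eq_add] at h
    rw [h]; ring

/-- A dominating set of the cycle has at least `n/3` vertices. -/
lemma dom_card {m : ℕ} {M : Finset (Fin (m + 3))}
    (h : Dominating (cycleGraph (m + 3)) ↑M) : m + 3 ≤ 3 * M.card := by
  have hsub : (univ : Finset (Fin (m + 3))) ⊆ M.biUnion (fun u => {u - 1, u, u + 1}) := by
    intro v _
    rw [Finset.mem_biUnion]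
    rcases h v with hv | ⟨u, hu, hadj⟩
    · exact ⟨v, hv, by simp⟩
    · refine ⟨u, hu, ?_⟩
      rcases adj_cases hadj with h | h <;> simp [h]
  have h1 : (univ : Finset (Fin (m + 3))).card ≤
      ∑ u ∈ M, ({u - 1, u, u + 1} : Finset (Fin (m + 3))).card :=
    le_trans (Finset.card_le_card hsub) (Finset.card_biUnion_le)
  have h2 : ∑ u ∈ M, ({u - 1, u, u + 1} : Finset (Fin (m + 3))).card ≤ ∑ _u ∈ M, 3 := by
    refine Finset.sum_le_sum fun u _ => ?_
    refine le_trans (Finset.card_insert_le _ _) (Nat.succ_le_succ ?_)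
    exact le_trans (Finset.card_insert_le _ _) (by simp)
  simp only [Finset.card_univ, Fintype.card_fin, Finset.sum_const, smul_eq_mul] at h1 h2
  omega

/-- An independent set of the cycle has at most `n/2` vertices. -/
lemma indep_card {m : ℕ} {A : Finset (Fin (m + 3))}
    (h : IndepSet (cycleGraph (m + 3)) ↑A) : 2 * A.card ≤ m + 3 := by
  have hdisj : Disjoint A (A.image (· + 1)) := by
    rw [Finset.disjoint_right]
    intro x hx hxA
    rw [Finset.mem_image] at hx
    obtain ⟨a, ha, rfl⟩ := hx
    exact h (by exact_mod_cast ha) (by exact_mod_cast hxA) (adj_succ a)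
  have hcard : (A ∪ A.image (· + 1)).card = A.card + A.card := by
    rw [Finset.card_union_of_disjoint hdisj, Finset.card_image_of_injective _
      (add_left_injective 1)]
  have := Finset.card_le_univ (A ∪ A.image (· + 1))
  simp only [Finset.card_univ, Fintype.card_fin] at this
  omega

lemma singleton_not_dom {m : ℕ} (hm : 1 ≤ m) (v : Fin (m + 3)) :
    ¬ Dominating (cycleGraph (m + 3)) ({v} : Set (Fin (m + 3))) := by
  intro h
  have : Dominating (cycleGraph (m + 3)) (↑({v} : Finset (Fin (m + 3)))) := by
    simpa using h
  have := dom_card this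
  simp at this
  omega

/-- Boundary vertex: if S is nonempty and not everything, there is w ∉ S with w - 1 ∈ S. -/
lemma exists_boundary {m : ℕ} {S : Finset (Fin (m + 3))} (hne : S.Nonempty) (hnu : S ≠ univ) :
    ∃ w : Fin (m + 3), w ∉ S ∧ w - 1 ∈ S := by
  obtain ⟨a, ha⟩ := hne
  have hex : ∃ u : Fin (m + 3), u ∉ S := by
    by_contra hc
    push_neg at hc
    exact hnu (Finset.eq_univ_of_forall hc)
  obtain ⟨u, hu⟩ := hex
  have hP : ∃ j : ℕ, a + (j : Fin (m + 3)) ∉ S := by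
    refine ⟨(u - a).val, ?_⟩
    rwa [Fin.cast_val_eq_self, add_sub_cancel]
  classical
  set k := Nat.find hP with hk
  have hknot : a + (k : Fin (m + 3)) ∉ S := Nat.find_spec hP
  have hkpos : k ≠ 0 := by
    intro h0
    rw [h0] at hknot
    simp at hknot
    exact hknot ha
  refine ⟨a + (k : Fin (m + 3)), hknot, ?_⟩
  have hprev : a + ((k - 1 : ℕ) : Fin (m + 3)) ∈ S := by
    by_contra hc
    have h2 : k ≤ k - 1 := Nat.find_le hc
    omega
  have hcast : ((k : ℕ) : Fin (m + 3)) = ((k - 1 : ℕ) : Fin (m + 3)) + 1 := by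
    have : k = (k - 1) + 1 := by omega
    rw [this]
    push_cast
    ring
  rw [hcast]
  have heq : a + (((k - 1 : ℕ) : Fin (m + 3)) + 1) - 1 = a + ((k - 1 : ℕ) : Fin (m + 3)) := by
    ring
  rw [heq]
  exact hprev

lemma ICCoalition.symm {G : SimpleGraph V} {A B : Set V} (h : ICCoalition G A B) :
    ICCoalition G B A := by
  obtain ⟨hd, hiA, hiB, hnA, hnB, hU⟩ := h
  exact ⟨hd.symm, hiB, hiA, hnB, hnA, by rwa [Set.union_comm]⟩

/-- A class of a cycle can be in coalition with at most two pairwise disjoint sets. -/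
lemma partners_le_two {m : ℕ} {A B1 B2 B3 : Finset (Fin (m + 3))}
    (hA : A.Nonempty)
    (hd12 : Disjoint B1 B2) (hd13 : Disjoint B1 B3) (hd23 : Disjoint B2 B3)
    (h1 : ICCoalition (cycleGraph (m + 3)) ↑A ↑B1)
    (h2 : ICCoalition (cycleGraph (m + 3)) ↑A ↑B2)
    (h3 : ICCoalition (cycleGraph (m + 3)) ↑A ↑B3) : False := by
  classical
  set G := cycleGraph (m + 3) with hG
  have hnd : ¬ Dominating G (↑A : Set (Fin (m + 3))) := fun hd =>
    h1.2.2.2.1 ⟨h1.2.1, hd⟩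
  set D : Finset (Fin (m + 3)) :=
    univ.filter (fun v => v ∈ A ∨ ∃ u ∈ A, G.Adj u v) with hD
  have hmemD : ∀ v, v ∈ D ↔ (v ∈ A ∨ ∃ u ∈ A, G.Adj u v) := by
    intro v; simp [hD]
  obtain ⟨a, ha⟩ := hA
  have hDne : D.Nonempty := ⟨a, (hmemD _).2 (Or.inl ha)⟩
  have hDnu : D ≠ univ := by
    intro hc
    apply hnd
    intro v
    have hv : v ∈ D := hc ▸ Finset.mem_univ v
    rcases (hmemD v).1 hv with h | ⟨u, hu, hadj⟩
    · exact Or.inl (by exact_mod_cast h)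
    · exact Or.inr ⟨u, by exact_mod_cast hu, hadj⟩
  obtain ⟨w, hw, hw1⟩ := exists_boundary hDne hDnu
  have hwA : w ∉ A := fun hc => hw ((hmemD w).2 (Or.inl hc))
  have hwAdj : ∀ u ∈ A, ¬ G.Adj u w := fun u hu hadj => hw ((hmemD w).2 (Or.inr ⟨u, hu, hadj⟩))
  have hu : ∃ u ∈ A, G.Adj u (w - 1) := by
    rcases (hmemD _).1 hw1 with h | h
    · exfalso
      apply hwAdj (w - 1) h
      have hadj : G.Adj (w - 1) (w - 1 + 1) := adj_succ _
      simpa [sub_add_cancel] using hadj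
    · exact h
  obtain ⟨u, huA, huadj⟩ := hu
  have key : ∀ B : Finset (Fin (m + 3)), ICCoalition G ↑A ↑B → w ∈ B ∨ w + 1 ∈ B := by
    intro B hB
    have hdom := hB.2.2.2.2.2.2
    have hind := hB.2.2.2.2.2.1
    rcases hdom w with hmem | ⟨x, hx, hadj⟩
    · rcases hmem with hmem | hmem
      · exact absurd (by exact_mod_cast hmem) hwA
      · exact Or.inl (by exact_mod_cast hmem)
    · have hxB : x ∈ B := by
        rcases hx with hx | hx
        · exact absurd hadj (hwAdj x (by exact_mod_cast hx))
        · exact_mod_cast hx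
      rcases adj_cases hadj with h | h
      · -- w = x + 1, so x = w - 1 : contradiction with independence
        exfalso
        have hxw : x = w - 1 := by rw [h]; ring
        have : ¬ G.Adj u x := hind (Or.inl (by exact_mod_cast huA))
          (Or.inr (by exact_mod_cast hxB))
        rw [hxw] at this
        exact this huadj
      · -- w = x - 1, so x = w + 1
        have hxw : x = w + 1 := by rw [h]; ring
        exact Or.inr (hxw ▸ hxB)
  rcases key B1 h1 with c1 | c1 <;> rcases key B2 h2 with c2 | c2 <;>
    rcases key B3 h3 with c3 | c3 <;>
    first
      | exact (Finset.disjoint_left.mp hd12 c1) c2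
      | exact (Finset.disjoint_left.mp hd13 c1) c3
      | exact (Finset.disjoint_left.mp hd23 c2) c3

lemma exists_three {α : Type*} [DecidableEq α] {s : Finset α} (h : 3 ≤ s.card) :
    ∃ x y z, x ∈ s ∧ y ∈ s ∧ z ∈ s ∧ x ≠ y ∧ x ≠ z ∧ y ≠ z := by
  obtain ⟨x, hx⟩ := Finset.card_pos.mp (show 0 < s.card by omega)
  have h1 : 2 ≤ (s.erase x).card := by
    rw [Finset.card_erase_of_mem hx]; omega
  obtain ⟨y, hy⟩ := Finset.card_pos.mp (by omega : 0 < (s.erase x).card)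
  have h2 : 1 ≤ ((s.erase x).erase y).card := by
    rw [Finset.card_erase_of_mem hy]; omega
  obtain ⟨z, hz⟩ := Finset.card_pos.mp (by omega : 0 < ((s.erase x).erase y).card)
  have hzy := (Finset.mem_erase.mp hz).1
  have hz' := (Finset.mem_erase.mp hz).2
  have hzx := (Finset.mem_erase.mp hz').1
  have hzs := (Finset.mem_erase.mp hz').2
  have hyx := (Finset.mem_erase.mp hy).1
  have hys := (Finset.mem_erase.mp hy).2
  exact ⟨x, y, z, hx, hys, hzs, Ne.symm hyx, Ne.symm hzx, Ne.symm hzy⟩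

/-- Any graph on ≥ 7 vertices with min degree ≥ 1 and max degree ≤ 2 has 3 disjoint edges. -/
lemma three_matching {α : Type*} [DecidableEq α] {π : Finset α} {R : α → α → Prop}
    (hsym : ∀ a b, R a b → R b a)
    (hne : ∀ a b, R a b → a ≠ b)
    (hdeg : ∀ a b c d, R a b → R a c → R a d → b = c ∨ b = d ∨ c = d)
    (hex : ∀ a ∈ π, ∃ b ∈ π, R a b)
    (hcard : 7 ≤ π.card) :
    ∃ a₁ b₁ a₂ b₂ a₃ b₃ : α,
      (a₁ ∈ π ∧ b₁ ∈ π ∧ a₂ ∈ π ∧ b₂ ∈ π ∧ a₃ ∈ π ∧ b₃ ∈ π) ∧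
      (R a₁ b₁ ∧ R a₂ b₂ ∧ R a₃ b₃) ∧
      (a₁ ∉ ({a₂, b₂, a₃, b₃} : Finset α) ∧ b₁ ∉ ({a₂, b₂, a₃, b₃} : Finset α) ∧
        a₂ ∉ ({a₃, b₃} : Finset α) ∧ b₂ ∉ ({a₃, b₃} : Finset α)) := by
  classical
  obtain ⟨a₁, ha₁⟩ := Finset.card_pos.mp (by omega : 0 < π.card)
  obtain ⟨b₁, hb₁, hR1⟩ := hex a₁ ha₁
  set π₂ := π \ {a₁, b₁} with hπ₂
  have hmem₂ : ∀ x, x ∈ π₂ ↔ x ∈ π ∧ x ≠ a₁ ∧ x ≠ b₁ := by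
    intro x; simp [hπ₂, Finset.mem_sdiff]
  have hπ₂card : 5 ≤ π₂.card := by
    have h1 : π.card - ({a₁, b₁} : Finset α).card ≤ π₂.card := Finset.le_card_sdiff _ _
    have h2 : ({a₁, b₁} : Finset α).card ≤ 2 := Finset.card_insert_le _ _ |>.trans (by simp)
    omega
  have hkill : ∀ p q : α, p ≠ q → p ≠ b₁ → q ≠ b₁ → R p a₁ → R q a₁ → False := by
    intro p q hpq hpb hqb hp hq
    rcases hdeg a₁ p q b₁ (hsym _ _ hp) (hsym _ _ hq) hR1 with h | h | h
    · exact hpq h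
    · exact hpb h
    · exact hqb h
  have hkill' : ∀ p q : α, p ≠ q → p ≠ a₁ → q ≠ a₁ → R p b₁ → R q b₁ → False := by
    intro p q hpq hpb hqb hp hq
    rcases hdeg b₁ p q a₁ (hsym _ _ hp) (hsym _ _ hq) (hsym _ _ hR1) with h | h | h
    · exact hpq h
    · exact hpb h
    · exact hqb h
  have step2 : ∃ x ∈ π₂, ∃ y ∈ π₂, R x y := by
    by_contra hc
    push_neg at hc
    have hpart : ∀ x ∈ π₂, R x a₁ ∨ R x b₁ := by
      intro x hx
      obtain ⟨b, hb, hRb⟩ := hex x ((hmem₂ x).1 hx).1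
      by_cases hb2 : b ∈ π₂
      · exact absurd hRb (hc x hx b hb2)
      · have : b = a₁ ∨ b = b₁ := by
          rcases (em (b = a₁)) with h | h
          · exact Or.inl h
          rcases (em (b = b₁)) with h' | h'
          · exact Or.inr h'
          exact absurd ((hmem₂ b).2 ⟨hb, h, h'⟩) hb2
        rcases this with rfl | rfl
        · exact Or.inl hRb
        · exact Or.inr hRb
    obtain ⟨x, y, z, hx, hy, hz, hxy, hxz, hyz⟩ := exists_three (by omega : 3 ≤ π₂.card)
    have hx' := (hmem₂ x).1 hx
    have hy' := (hmem₂ y).1 hy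
    have hz' := (hmem₂ z).1 hz
    rcases hpart x hx with h1 | h1 <;> rcases hpart y hy with h2 | h2 <;>
      rcases hpart z hz with h3 | h3 <;>
      first
        | exact hkill x y hxy hx'.2.2 hy'.2.2 h1 h2
        | exact hkill x z hxz hx'.2.2 hz'.2.2 h1 h3
        | exact hkill y z hyz hy'.2.2 hz'.2.2 h2 h3
        | exact hkill' x y hxy hx'.2.1 hy'.2.1 h1 h2
        | exact hkill' x z hxz hx'.2.1 hz'.2.1 h1 h3
        | exact hkill' y z hyz hy'.2.1 hz'.2.1 h2 h3
  obtain ⟨a₂, ha₂, b₂, hb₂, hR2⟩ := step2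
  have ha₂' := (hmem₂ a₂).1 ha₂
  have hb₂' := (hmem₂ b₂).1 hb₂
  set π₃ := π \ {a₁, b₁, a₂, b₂} with hπ₃
  have hmem₃ : ∀ x, x ∈ π₃ ↔ x ∈ π ∧ x ≠ a₁ ∧ x ≠ b₁ ∧ x ≠ a₂ ∧ x ≠ b₂ := by
    intro x; simp [hπ₃, Finset.mem_sdiff]
  have hπ₃card : 3 ≤ π₃.card := by
    have h1 : π.card - ({a₁, b₁, a₂, b₂} : Finset α).card ≤ π₃.card := Finset.le_card_sdiff _ _
    have h2 : ({a₁, b₁, a₂, b₂} : Finset α).card ≤ 4 := by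
      refine (Finset.card_insert_le _ _).trans (Nat.succ_le_succ ?_)
      refine (Finset.card_insert_le _ _).trans (Nat.succ_le_succ ?_)
      exact (Finset.card_insert_le _ _).trans (by simp)
    omega
  by_cases hin : ∃ x ∈ π₃, ∃ y ∈ π₃, R x y
  · obtain ⟨a₃, ha₃, b₃, hb₃, hR3⟩ := hin
    have ha₃' := (hmem₃ a₃).1 ha₃
    have hb₃' := (hmem₃ b₃).1 hb₃
    have d1 : a₁ ∉ ({a₂, b₂, a₃, b₃} : Finset α) := by
      simp only [Finset.mem_insert, Finset.mem_singleton]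
      push_neg
      exact ⟨Ne.symm ha₂'.2.1, Ne.symm hb₂'.2.1, Ne.symm ha₃'.2.1, Ne.symm hb₃'.2.1⟩
    have d2 : b₁ ∉ ({a₂, b₂, a₃, b₃} : Finset α) := by
      simp only [Finset.mem_insert, Finset.mem_singleton]
      push_neg
      exact ⟨Ne.symm ha₂'.2.2, Ne.symm hb₂'.2.2, Ne.symm ha₃'.2.2.1, Ne.symm hb₃'.2.2.1⟩
    have d3 : a₂ ∉ ({a₃, b₃} : Finset α) := by
      simp only [Finset.mem_insert, Finset.mem_singleton]
      push_neg
      exact ⟨Ne.symm ha₃'.2.2.2.1, Ne.symm hb₃'.2.2.2.1⟩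
    have d4 : b₂ ∉ ({a₃, b₃} : Finset α) := by
      simp only [Finset.mem_insert, Finset.mem_singleton]
      push_neg
      exact ⟨Ne.symm ha₃'.2.2.2.2, Ne.symm hb₃'.2.2.2.2⟩
    exact ⟨a₁, b₁, a₂, b₂, a₃, b₃, ⟨ha₁, hb₁, ha₂'.1, hb₂'.1, ha₃'.1, hb₃'.1⟩,
      ⟨hR1, hR2, hR3⟩, d1, d2, d3, d4⟩
  · push_neg at hin
    have hkill2 : ∀ p q : α, p ≠ q → p ≠ b₂ → q ≠ b₂ → R p a₂ → R q a₂ → False := by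
      intro p q hpq hpb hqb hp hq
      rcases hdeg a₂ p q b₂ (hsym _ _ hp) (hsym _ _ hq) hR2 with h | h | h
      · exact hpq h
      · exact hpb h
      · exact hqb h
    have hkill2' : ∀ p q : α, p ≠ q → p ≠ a₂ → q ≠ a₂ → R p b₂ → R q b₂ → False := by
      intro p q hpq hpb hqb hp hq
      rcases hdeg b₂ p q a₂ (hsym _ _ hp) (hsym _ _ hq) (hsym _ _ hR2) with h | h | h
      · exact hpq h
      · exact hpb h
      · exact hqb h
    have hpart : ∀ x ∈ π₃, ∃ c, (c = a₁ ∨ c = b₁ ∨ c = a₂ ∨ c = b₂) ∧ R x c := by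
      intro x hx
      obtain ⟨b, hb, hRb⟩ := hex x ((hmem₃ x).1 hx).1
      by_cases hb3 : b ∈ π₃
      · exact absurd hRb (hin x hx b hb3)
      · refine ⟨b, ?_, hRb⟩
        by_contra hc
        push_neg at hc
        exact hb3 ((hmem₃ b).2 ⟨hb, hc.1, hc.2.1, hc.2.2.1, hc.2.2.2⟩)
    obtain ⟨x, y, z, hx, hy, hz, hxy, hxz, hyz⟩ := exists_three hπ₃card
    have hx' := (hmem₃ x).1 hx
    have hy' := (hmem₃ y).1 hy
    have hz' := (hmem₃ z).1 hz
    obtain ⟨p, hp4, hpR⟩ := hpart x hx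
    obtain ⟨q, hq4, hqR⟩ := hpart y hy
    obtain ⟨r, hr4, hrR⟩ := hpart z hz
    -- if two partners coincide, contradiction
    have hshare : ∀ s t c : α, s ∈ π₃ → t ∈ π₃ → s ≠ t →
        (c = a₁ ∨ c = b₁ ∨ c = a₂ ∨ c = b₂) → R s c → R t c → False := by
      intro s t c hs ht hst hc hRs hRt
      have hs' := (hmem₃ s).1 hs
      have ht' := (hmem₃ t).1 ht
      rcases hc with rfl | rfl | rfl | rfl
      · exact hkill s t hst hs'.2.2.1 ht'.2.2.1 hRs hRt
      · exact hkill' s t hst hs'.2.1 ht'.2.1 hRs hRt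
      · exact hkill2 s t hst hs'.2.2.2.2 ht'.2.2.2.2 hRs hRt
      · exact hkill2' s t hst hs'.2.2.2.1 ht'.2.2.2.1 hRs hRt
    have hpq : p ≠ q := by
      rintro rfl; exact hshare x y p hx hy hxy hp4 hpR hqR
    have hpr : p ≠ r := by
      rintro rfl; exact hshare x z p hx hz hxz hp4 hpR hrR
    have hqr : q ≠ r := by
      rintro rfl; exact hshare y z q hy hz hyz hq4 hqR hrR
    have hpπ : p ∈ π := by
      rcases hp4 with rfl | rfl | rfl | rfl
      exacts [ha₁, hb₁, ha₂'.1, hb₂'.1]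
    have hqπ : q ∈ π := by
      rcases hq4 with rfl | rfl | rfl | rfl
      exacts [ha₁, hb₁, ha₂'.1, hb₂'.1]
    have hrπ : r ∈ π := by
      rcases hr4 with rfl | rfl | rfl | rfl
      exacts [ha₁, hb₁, ha₂'.1, hb₂'.1]
    -- x ≠ any of the 4-set elements, similarly y z
    have hx4 : ∀ c : α, (c = a₁ ∨ c = b₁ ∨ c = a₂ ∨ c = b₂) → x ≠ c := by
      rintro c (rfl | rfl | rfl | rfl)
      exacts [hx'.2.1, hx'.2.2.1, hx'.2.2.2.1, hx'.2.2.2.2]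
    have hy4 : ∀ c : α, (c = a₁ ∨ c = b₁ ∨ c = a₂ ∨ c = b₂) → y ≠ c := by
      rintro c (rfl | rfl | rfl | rfl)
      exacts [hy'.2.1, hy'.2.2.1, hy'.2.2.2.1, hy'.2.2.2.2]
    have hz4 : ∀ c : α, (c = a₁ ∨ c = b₁ ∨ c = a₂ ∨ c = b₂) → z ≠ c := by
      rintro c (rfl | rfl | rfl | rfl)
      exacts [hz'.2.1, hz'.2.2.1, hz'.2.2.2.1, hz'.2.2.2.2]
    have d1 : x ∉ ({y, q, z, r} : Finset α) := by
      simp only [Finset.mem_insert, Finset.mem_singleton]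
      push_neg
      exact ⟨hxy, hx4 q hq4, hxz, hx4 r hr4⟩
    have d2 : p ∉ ({y, q, z, r} : Finset α) := by
      simp only [Finset.mem_insert, Finset.mem_singleton]
      push_neg
      exact ⟨Ne.symm (hy4 p hp4), hpq, Ne.symm (hz4 p hp4), hpr⟩
    have d3 : y ∉ ({z, r} : Finset α) := by
      simp only [Finset.mem_insert, Finset.mem_singleton]
      push_neg
      exact ⟨hyz, hy4 r hr4⟩
    have d4 : q ∉ ({z, r} : Finset α) := by
      simp only [Finset.mem_insert, Finset.mem_singleton]
      push_neg
      exact ⟨Ne.symm (hz4 q hq4), hqr⟩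
    exact ⟨x, p, y, q, z, r, ⟨hx'.1, hpπ, hy'.1, hqπ, hz'.1, hrπ⟩, ⟨hpR, hqR, hrR⟩,
      d1, d2, d3, d4⟩

-- general n wrappers
lemma dom_card' {n : ℕ} (hn : 3 ≤ n) {M : Finset (Fin n)}
    (h : Dominating (cycleGraph n) ↑M) : n ≤ 3 * M.card := by
  obtain ⟨m, rfl⟩ : ∃ m, n = m + 3 := ⟨n - 3, by omega⟩
  exact dom_card h

lemma indep_card' {n : ℕ} (hn : 3 ≤ n) {A : Finset (Fin n)}
    (h : IndepSet (cycleGraph n) ↑A) : 2 * A.card ≤ n := by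
  obtain ⟨m, rfl⟩ : ∃ m, n = m + 3 := ⟨n - 3, by omega⟩
  exact indep_card h

lemma singleton_not_dom' {n : ℕ} (hn : 4 ≤ n) (v : Fin n) :
    ¬ Dominating (cycleGraph n) ({v} : Set (Fin n)) := by
  obtain ⟨m, rfl⟩ : ∃ m, n = m + 3 := ⟨n - 3, by omega⟩
  exact singleton_not_dom (by omega) v

lemma partners_le_two' {n : ℕ} (hn : 3 ≤ n) {A B1 B2 B3 : Finset (Fin n)}
    (hA : A.Nonempty)
    (hd12 : Disjoint B1 B2) (hd13 : Disjoint B1 B3) (hd23 : Disjoint B2 B3)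
    (h1 : ICCoalition (cycleGraph n) ↑A ↑B1)
    (h2 : ICCoalition (cycleGraph n) ↑A ↑B2)
    (h3 : ICCoalition (cycleGraph n) ↑A ↑B3) : False := by
  obtain ⟨m, rfl⟩ : ∃ m, n = m + 3 := ⟨n - 3, by omega⟩
  exact partners_le_two hA hd12 hd13 hd23 h1 h2 h3

lemma IsPartition.pairwise_disjoint {π : Finset (Finset V)} (hπ : IsPartition π)
    {A B : Finset V} (hA : A ∈ π) (hB : B ∈ π) (hne : A ≠ B) : Disjoint A B := by
  rw [Finset.disjoint_left]
  intro v hvA hvB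
  obtain ⟨C, -, huniq⟩ := hπ.2 v
  exact hne ((huniq A ⟨hA, hvA⟩).trans (huniq B ⟨hB, hvB⟩).symm)

lemma IsPartition.sum_card [Fintype V] [DecidableEq V] {π : Finset (Finset V)}
    (hπ : IsPartition π) : ∑ A ∈ π, A.card = Fintype.card V := by
  have huniv : π.biUnion id = univ := by
    apply Finset.eq_univ_of_forall
    intro v
    obtain ⟨A, ⟨hA, hvA⟩, -⟩ := hπ.2 v
    exact Finset.mem_biUnion.2 ⟨A, hA, hvA⟩
  have hbu := Finset.card_biUnion
    (fun A hA B hB hne => hπ.pairwise_disjoint hA hB hne : ∀ A ∈ π, ∀ B ∈ π, A ≠ B → Disjoint (id A) (id B))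
  rw [huniv] at hbu
  simpa using hbu.symm

lemma IsPartition.card_le [Fintype V] [DecidableEq V] {π : Finset (Finset V)}
    (hπ : IsPartition π) : π.card ≤ Fintype.card V := by
  calc π.card = ∑ _A ∈ π, 1 := by simp
  _ ≤ ∑ A ∈ π, A.card := Finset.sum_le_sum (fun A hA => (hπ.1 A hA).card_pos)
  _ = Fintype.card V := hπ.sum_card

lemma exists_partner {n : ℕ} (hn : 4 ≤ n) {π : Finset (Finset (Fin n))}
    (hπ : IsICPartition (cycleGraph n) π) :
    ∀ A ∈ π, ∃ B ∈ π, ICCoalition (cycleGraph n) ↑A ↑B := by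
  intro A hA
  rcases hπ.2 A hA with ⟨v, hv, hdom⟩ | ⟨-, B, hB, -, hco⟩
  · exact absurd (hv ▸ hdom) (singleton_not_dom' hn v)
  · exact ⟨B, hB, hco⟩

/-- Main upper bound: an ic-partition of a cycle on ≥ 4 vertices has at most 6 classes. -/
lemma icp_card_le_six {n : ℕ} (hn : 4 ≤ n) {π : Finset (Finset (Fin n))}
    (hπ : IsICPartition (cycleGraph n) π) : π.card ≤ 6 := by
  classical
  by_contra hc
  push_neg at hc
  have hcard : 7 ≤ π.card := hc
  have hne' : ∀ A ∈ π, A.Nonempty := hπ.1.1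
  set R : Finset (Fin n) → Finset (Fin n) → Prop :=
    fun A B => A ∈ π ∧ B ∈ π ∧ ICCoalition (cycleGraph n) ↑A ↑B with hR
  have hsym : ∀ a b, R a b → R b a := fun a b h => ⟨h.2.1, h.1, h.2.2.symm⟩
  have hneq : ∀ a b, R a b → a ≠ b := by
    intro a b h hab
    subst hab
    have hd := h.2.2.1
    obtain ⟨x, hx⟩ := hne' a h.1
    exact (Set.disjoint_left.mp hd (by exact_mod_cast hx)) (by exact_mod_cast hx)
  have hdeg : ∀ a b c d, R a b → R a c → R a d → b = c ∨ b = d ∨ c = d := by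
    intro a b c d hb hc' hd'
    by_contra hcon
    push_neg at hcon
    exact partners_le_two' (by omega) (hne' a hb.1)
      (hπ.1.pairwise_disjoint hb.2.1 hc'.2.1 hcon.1)
      (hπ.1.pairwise_disjoint hb.2.1 hd'.2.1 hcon.2.1)
      (hπ.1.pairwise_disjoint hc'.2.1 hd'.2.1 hcon.2.2)
      hb.2.2 hc'.2.2 hd'.2.2
  have hex : ∀ a ∈ π, ∃ b ∈ π, R a b := by
    intro a ha
    obtain ⟨B, hB, hco⟩ := exists_partner hn hπ a ha
    exact ⟨B, hB, ha, hB, hco⟩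
  obtain ⟨a₁, b₁, a₂, b₂, a₃, b₃, hmem, hRs, hd1, hd2, hd3, hd4⟩ :=
    three_matching hsym hneq hdeg hex hcard
  have hssub : ¬ π ⊆ ({a₁, b₁, a₂, b₂, a₃, b₃} : Finset (Finset (Fin n))) := by
    intro hsub
    have h6 : ({a₁, b₁, a₂, b₂, a₃, b₃} : Finset (Finset (Fin n))).card ≤ 6 := by
      refine (Finset.card_insert_le _ _).trans (Nat.succ_le_succ ?_)
      refine (Finset.card_insert_le _ _).trans (Nat.succ_le_succ ?_)
      refine (Finset.card_insert_le _ _).trans (Nat.succ_le_succ ?_)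
      refine (Finset.card_insert_le _ _).trans (Nat.succ_le_succ ?_)
      exact (Finset.card_insert_le _ _).trans (by simp)
    have := Finset.card_le_card hsub
    omega
  obtain ⟨X, hXπ, hXs⟩ := Finset.not_subset.mp hssub
  have hsum := hπ.1.sum_card
  rw [Fintype.card_fin] at hsum
  have hdomsum : ∀ a b : Finset (Fin n), ICCoalition (cycleGraph n) ↑a ↑b →
      n ≤ 3 * (a.card + b.card) := by
    intro a b h
    have hdom : Dominating (cycleGraph n) ↑(a ∪ b) := by
      rw [Finset.coe_union]; exact h.2.2.2.2.2.2
    have h1 := dom_card' (by omega) hdom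
    have h2 := Finset.card_union_le a b
    omega
  have hc1 := hdomsum _ _ hRs.1.2.2
  have hc2 := hdomsum _ _ hRs.2.1.2.2
  have hc3 := hdomsum _ _ hRs.2.2.2.2
  have hsub7 : ({X, a₁, b₁, a₂, b₂, a₃, b₃} : Finset (Finset (Fin n))) ⊆ π := by
    intro Y hY
    simp only [Finset.mem_insert, Finset.mem_singleton] at hY
    rcases hY with rfl | rfl | rfl | rfl | rfl | rfl | rfl
    exacts [hXπ, hmem.1, hmem.2.1, hmem.2.2.1, hmem.2.2.2.1, hmem.2.2.2.2.1, hmem.2.2.2.2.2]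
  have hsum7 : ∑ A ∈ ({X, a₁, b₁, a₂, b₂, a₃, b₃} : Finset (Finset (Fin n))), A.card ≤ n :=
    le_trans (Finset.sum_le_sum_of_subset hsub7) (le_of_eq hsum)
  simp only [Finset.mem_insert, Finset.mem_singleton] at hXs hd1 hd2 hd3 hd4
  push_neg at hXs hd1 hd2 hd3 hd4
  have e1 : a₁ ≠ b₁ := hneq _ _ hRs.1
  have e2 : a₂ ≠ b₂ := hneq _ _ hRs.2.1
  have e3 : a₃ ≠ b₃ := hneq _ _ hRs.2.2
  rw [Finset.sum_insert (by
        simp only [Finset.mem_insert, Finset.mem_singleton]; push_neg; exact hXs),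
      Finset.sum_insert (by
        simp only [Finset.mem_insert, Finset.mem_singleton]; push_neg
        exact ⟨e1, hd1.1, hd1.2.1, hd1.2.2.1, hd1.2.2.2⟩),
      Finset.sum_insert (by
        simp only [Finset.mem_insert, Finset.mem_singleton]; push_neg
        exact ⟨hd2.1, hd2.2.1, hd2.2.2.1, hd2.2.2.2⟩),
      Finset.sum_insert (by
        simp only [Finset.mem_insert, Finset.mem_singleton]; push_neg
        exact ⟨e2, hd3.1, hd3.2⟩),
      Finset.sum_insert (by
        simp only [Finset.mem_insert, Finset.mem_singleton]; push_neg
        exact ⟨hd4.1, hd4.2⟩),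
      Finset.sum_insert (by simp only [Finset.mem_singleton]; exact e3),
      Finset.sum_singleton] at hsum7
  have hXpos : 1 ≤ X.card := (hne' X hXπ).card_pos
  omega

/-- For the 7-cycle, at most 5 classes. -/
lemma icp7_card_le_five {π : Finset (Finset (Fin 7))}
    (hπ : IsICPartition (cycleGraph 7) π) : π.card ≤ 5 := by
  classical
  by_contra hc
  push_neg at hc
  have h6 : π.card = 6 := le_antisymm (icp_card_le_six (by norm_num) hπ) hc
  have hne' := hπ.1.1
  have hsum := hπ.1.sum_card
  rw [Fintype.card_fin] at hsum
  have hpair : ∀ A B : Finset (Fin 7), ICCoalition (cycleGraph 7) ↑A ↑B →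
      A.card + B.card = 3 := by
    intro A B h
    have hdom : Dominating (cycleGraph 7) ↑(A ∪ B) := by
      rw [Finset.coe_union]; exact h.2.2.2.2.2.2
    have hind : IndepSet (cycleGraph 7) ↑(A ∪ B) := by
      rw [Finset.coe_union]; exact h.2.2.2.2.2.1
    have h1 := dom_card' (by norm_num) hdom
    have h2 := indep_card' (by norm_num) hind
    have h3 := Finset.card_union_le A B
    have h4 : (A ∪ B).card = A.card + B.card :=
      Finset.card_union_of_disjoint (Finset.disjoint_coe.mp h.1)
    omega
  have hbig : ∀ D1 ∈ π, ∀ D2 ∈ π, 2 ≤ D1.card → 2 ≤ D2.card → D1 = D2 := by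
    intro D1 h1 D2 h2 hc1 hc2
    by_contra hne12
    have hD2' : D2 ∈ π.erase D1 := Finset.mem_erase.2 ⟨fun h => hne12 h.symm, h2⟩
    have e1 : D1.card + ∑ A ∈ π.erase D1, A.card = ∑ A ∈ π, A.card :=
      Finset.add_sum_erase _ _ h1
    have e2 : D2.card + ∑ A ∈ (π.erase D1).erase D2, A.card = ∑ A ∈ π.erase D1, A.card :=
      Finset.add_sum_erase _ _ hD2'
    have e3 : ((π.erase D1).erase D2).card = 4 := by
      rw [Finset.card_erase_of_mem hD2', Finset.card_erase_of_mem h1, h6]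
    have e4 : ((π.erase D1).erase D2).card ≤ ∑ A ∈ (π.erase D1).erase D2, A.card := by
      calc ((π.erase D1).erase D2).card = ∑ _A ∈ (π.erase D1).erase D2, 1 := by simp
      _ ≤ ∑ A ∈ (π.erase D1).erase D2, A.card := Finset.sum_le_sum (fun A hA =>
          (hne' A (Finset.mem_of_mem_erase (Finset.mem_of_mem_erase hA))).card_pos)
    omega
  by_cases hD : ∃ D ∈ π, 2 ≤ D.card
  · obtain ⟨D, hDπ, hDc⟩ := hD
    have h5 : (π.erase D).card = 5 := by rw [Finset.card_erase_of_mem hDπ, h6]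
    obtain ⟨x, y, z, hx, hy, hz, hxy, hxz, hyz⟩ := exists_three (by omega : 3 ≤ (π.erase D).card)
    have hxπ := Finset.mem_of_mem_erase hx
    have hyπ := Finset.mem_of_mem_erase hy
    have hzπ := Finset.mem_of_mem_erase hz
    have hpartnerD : ∀ w, w ∈ π.erase D → ICCoalition (cycleGraph 7) ↑D ↑w := by
      intro w hw
      have hwπ := Finset.mem_of_mem_erase hw
      obtain ⟨B, hBπ, hco⟩ := exists_partner (by norm_num) hπ w hwπ
      have hw1 : w.card = 1 := by
        have h1 := (hne' w hwπ).card_pos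
        by_contra hne1
        exact (Finset.mem_erase.mp hw).1 (hbig w hwπ D hDπ (by omega) hDc)
      have hB2 : 2 ≤ B.card := by
        have := hpair w B hco
        omega
      have hBD : B = D := hbig B hBπ D hDπ hB2 hDc
      rw [hBD] at hco
      exact hco.symm
    exact partners_le_two' (by norm_num) (hne' D hDπ)
      (hπ.1.pairwise_disjoint hxπ hyπ hxy)
      (hπ.1.pairwise_disjoint hxπ hzπ hxz)
      (hπ.1.pairwise_disjoint hyπ hzπ hyz)
      (hpartnerD x hx) (hpartnerD y hy) (hpartnerD z hz)
  · push_neg at hD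
    obtain ⟨A, hA⟩ : π.Nonempty := Finset.card_pos.mp (by omega)
    obtain ⟨B, hB, hco⟩ := exists_partner (by norm_num) hπ A hA
    have h1 := hpair A B hco
    have h2 := hD A hA
    have h3 := hD B hB
    omega

instance decidableExistsUnique {α : Type*} [Fintype α] [DecidableEq α] {p : α → Prop}
    [DecidablePred p] : Decidable (∃! a, p a) :=
  decidable_of_iff (∃ a, p a ∧ ∀ b, p b → b = a) Iff.rfl

section FinsetVersion
variable [DecidableEq V] (G : SimpleGraph V)

def FDom (A : Finset V) : Prop := ∀ v : V, v ∈ A ∨ ∃ u ∈ A, G.Adj u v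

def FInd (A : Finset V) : Prop := ∀ u ∈ A, ∀ v ∈ A, ¬ G.Adj u v

def FCoalition (A B : Finset V) : Prop :=
  Disjoint A B ∧ FInd G A ∧ FInd G B ∧ ¬ (FInd G A ∧ FDom G A) ∧
    ¬ (FInd G B ∧ FDom G B) ∧ (FInd G (A ∪ B) ∧ FDom G (A ∪ B))

def FICP (π : Finset (Finset V)) : Prop :=
  ((∀ A ∈ π, A.Nonempty) ∧ ∀ v : V, ∃! A : Finset V, A ∈ π ∧ v ∈ A) ∧
    ∀ A ∈ π, (∃ v : V, A = {v} ∧ FDom G A) ∨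
      (¬ (FInd G A ∧ FDom G A) ∧ ∃ B ∈ π, B ≠ A ∧ FCoalition G A B)

variable [Fintype V] [DecidableRel G.Adj]

instance {A : Finset V} : Decidable (FDom G A) := by unfold FDom; infer_instance
instance {A : Finset V} : Decidable (FInd G A) := by unfold FInd; infer_instance
instance {A B : Finset V} : Decidable (FCoalition G A B) := by unfold FCoalition; infer_instance
instance {π : Finset (Finset V)} : Decidable (FICP G π) := by unfold FICP; infer_instance

variable {G}

lemma fdom_iff {A : Finset V} : Dominating G ↑A ↔ FDom G A := Iff.rfl

lemma find_iff {A : Finset V} : IndepSet G ↑A ↔ FInd G A := by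
  constructor
  · intro h u hu v hv
    exact h hu hv
  · intro h u hu v hv
    exact h u hu v hv

lemma findep_iff {A : Finset V} : IndepDom G ↑A ↔ (FInd G A ∧ FDom G A) :=
  and_congr find_iff fdom_iff

lemma fcoal_iff {A B : Finset V} : ICCoalition G ↑A ↑B ↔ FCoalition G A B := by
  unfold ICCoalition FCoalition
  rw [← Finset.coe_union]
  exact and_congr Finset.disjoint_coe (and_congr find_iff (and_congr find_iff
    (and_congr (not_congr findep_iff) (and_congr (not_congr findep_iff) findep_iff))))

lemma ficp_iff {π : Finset (Finset V)} : IsICPartition G π ↔ FICP G π := by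
  unfold IsICPartition FICP IsPartition
  refine and_congr Iff.rfl (forall₂_congr fun A hA => or_congr ?_ ?_)
  · exact exists_congr fun v => and_congr Finset.coe_eq_singleton fdom_iff
  · exact and_congr (not_congr findep_iff)
      (exists_congr fun B => and_congr Iff.rfl (and_congr Iff.rfl fcoal_iff))

end FinsetVersion

/-- Assembly lemma for computing IC. -/
lemma IC_eq_of {n : ℕ} {π₀ : Finset (Finset (Fin n))} {k : ℕ}
    (h₀ : IsICPartition (SimpleGraph.cycleGraph n) π₀) (hk : π₀.card = k)
    (hub : ∀ π : Finset (Finset (Fin n)), IsICPartition (SimpleGraph.cycleGraph n) π →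
      π.card ≤ k) :
    IC (SimpleGraph.cycleGraph n) = k := by
  unfold IC
  have hmem : k ∈ {k | ∃ π : Finset (Finset (Fin n)),
      IsICPartition (SimpleGraph.cycleGraph n) π ∧ π.card = k} := ⟨π₀, h₀, hk⟩
  have hbdd : BddAbove {k | ∃ π : Finset (Finset (Fin n)),
      IsICPartition (SimpleGraph.cycleGraph n) π ∧ π.card = k} := by
    refine ⟨k, ?_⟩
    rintro x ⟨π, hπ, rfl⟩
    exact hub π hπ
  refine le_antisymm (csSup_le ⟨k, hmem⟩ ?_) (le_csSup hbdd hmem)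
  rintro x ⟨π, hπ, rfl⟩
  exact hub π hπ

lemma ic3 : IC (SimpleGraph.cycleGraph 3) = 3 := by
  refine IC_eq_of (π₀ := {{0}, {1}, {2}}) (by rw [ficp_iff]; decide) (by decide) ?_
  intro π hπ
  have := hπ.1.card_le
  simpa using this

lemma ic4 : IC (SimpleGraph.cycleGraph 4) = 4 := by
  refine IC_eq_of (π₀ := {{0}, {1}, {2}, {3}}) (by rw [ficp_iff]; decide) (by decide) ?_
  intro π hπ
  have := hπ.1.card_le
  simpa using this

lemma ic5 : IC (SimpleGraph.cycleGraph 5) = 5 := by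
  refine IC_eq_of (π₀ := {{0}, {1}, {2}, {3}, {4}}) (by rw [ficp_iff]; decide) (by decide) ?_
  intro π hπ
  have := hπ.1.card_le
  simpa using this

lemma ic6 : IC (SimpleGraph.cycleGraph 6) = 6 := by
  refine IC_eq_of (π₀ := {{0}, {1}, {2}, {3}, {4}, {5}}) (by rw [ficp_iff]; decide)
    (by decide) ?_
  intro π hπ
  have := hπ.1.card_le
  simpa using this

set_option maxRecDepth 40000 in
lemma ic7 : IC (SimpleGraph.cycleGraph 7) = 5 := by
  refine IC_eq_of (π₀ := {{0}, {5}, {6}, {1, 3}, {2, 4}}) (by rw [ficp_iff]; decide)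
    (by decide) ?_
  intro π hπ
  exact icp7_card_le_five hπ

/-- Build an ic-partition from a 6-coloring with a pairing of colors. -/
lemma build_icp [Fintype V] [DecidableEq V] {G : SimpleGraph V}
    (f : V → ℕ) (pair : ℕ → ℕ)
    (hpair : ∀ j < 6, pair j < 6 ∧ pair j ≠ j)
    (hf6 : ∀ v, f v < 6)
    (hne : ∀ j < 6, ∃ w : V, f w = j)
    (hinduni : ∀ j < 6, ∀ u v : V, (f u = j ∨ f u = pair j) → (f v = j ∨ f v = pair j) →
      ¬ G.Adj u v)
    (hdomuni : ∀ j < 6, ∀ v : V, ∃ u : V, (f u = j ∨ f u = pair j) ∧ (u = v ∨ G.Adj u v))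
    (hnotdom : ∀ j < 6, ∃ w : V, ∀ u : V, f u = j → ¬ (u = w ∨ G.Adj u w)) :
    ∃ π : Finset (Finset V), IsICPartition G π ∧ π.card = 6 := by
  classical
  set A : ℕ → Finset V := fun j => univ.filter (fun v => f v = j) with hA
  set π := (Finset.range 6).image A with hπdef
  have hmemA : ∀ j (v : V), v ∈ A j ↔ f v = j := by intro j v; simp [hA]
  have hAne : ∀ j < 6, (A j).Nonempty := fun j hj =>
    (hne j hj).elim (fun w hw => ⟨w, (hmemA j w).2 hw⟩)
  have hmemπ : ∀ B, B ∈ π ↔ ∃ j < 6, A j = B := by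
    intro B; simp [hπdef, Finset.mem_image, Finset.mem_range]
  have hAπ : ∀ j < 6, A j ∈ π := fun j hj => (hmemπ _).2 ⟨j, hj, rfl⟩
  have hAinj : ∀ j < 6, ∀ j' < 6, A j = A j' → j = j' := by
    intro j hj j' hj' he
    obtain ⟨w, hw⟩ := hAne j hj
    have hw' : w ∈ A j' := he ▸ hw
    rw [hmemA] at hw hw'
    omega
  have hindep : ∀ j < 6, ∀ k < 6, pair j = k ∨ j = k → IndepSet G ↑(A k) := by
    intro j hj k hk hjk u hu v hv
    rw [Finset.mem_coe, hmemA] at hu hv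
    rcases hjk with rfl | rfl
    · exact hinduni j hj u v (Or.inr hu) (Or.inr hv)
    · exact hinduni j hj u v (Or.inl hu) (Or.inl hv)
  have hnd : ∀ j < 6, ¬ IndepDom G ↑(A j) := by
    intro j hj h
    obtain ⟨w, hw⟩ := hnotdom j hj
    rcases h.2 w with hmem | ⟨u, hu, hadj⟩
    · exact hw w (by rwa [Finset.mem_coe, hmemA] at hmem) (Or.inl rfl)
    · exact hw u (by rwa [Finset.mem_coe, hmemA] at hu) (Or.inr hadj)
  have hco : ∀ j < 6, ICCoalition G ↑(A j) ↑(A (pair j)) := by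
    intro j hj
    obtain ⟨hp6, hpne⟩ := hpair j hj
    refine ⟨?_, hindep j hj j hj (Or.inr rfl), hindep j hj (pair j) hp6 (Or.inl rfl),
      hnd j hj, hnd (pair j) hp6, ?_, ?_⟩
    · rw [Finset.disjoint_coe, Finset.disjoint_left]
      intro v hv hv'
      rw [hmemA] at hv hv'
      omega
    · -- independence of the union
      intro u hu v hv
      have hu' : f u = j ∨ f u = pair j := by
        rcases hu with hu | hu
        · exact Or.inl ((hmemA _ _).1 (by exact_mod_cast hu))
        · exact Or.inr ((hmemA _ _).1 (by exact_mod_cast hu))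
      have hv' : f v = j ∨ f v = pair j := by
        rcases hv with hv | hv
        · exact Or.inl ((hmemA _ _).1 (by exact_mod_cast hv))
        · exact Or.inr ((hmemA _ _).1 (by exact_mod_cast hv))
      exact hinduni j hj u v hu' hv'
    · -- domination of the union
      intro v
      obtain ⟨u, hu, hc⟩ := hdomuni j hj v
      rcases hc with rfl | hadj
      · left
        rcases hu with hu | hu
        · exact Or.inl (by exact_mod_cast (hmemA _ _).2 hu)
        · exact Or.inr (by exact_mod_cast (hmemA _ _).2 hu)
      · right
        refine ⟨u, ?_, hadj⟩
        rcases hu with hu | hu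
        · exact Or.inl (by exact_mod_cast (hmemA _ _).2 hu)
        · exact Or.inr (by exact_mod_cast (hmemA _ _).2 hu)
  refine ⟨π, ⟨⟨?_, ?_⟩, ?_⟩, ?_⟩
  · intro B hB
    obtain ⟨j, hj, hAB⟩ := (hmemπ B).1 hB
    exact hAB ▸ hAne j hj
  · intro v
    refine ⟨A (f v), ⟨hAπ _ (hf6 v), (hmemA _ v).2 rfl⟩, ?_⟩
    rintro B ⟨hB, hvB⟩
    obtain ⟨j, hj, hAB⟩ := (hmemπ B).1 hB
    subst hAB
    rw [hmemA] at hvB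
    rw [hvB]
  · intro B hB
    obtain ⟨j, hj, hAB⟩ := (hmemπ B).1 hB
    subst hAB
    right
    refine ⟨hnd j hj, A (pair j), hAπ _ (hpair j hj).1, ?_, hco j hj⟩
    intro he
    exact (hpair j hj).2 (hAinj _ (hpair j hj).1 _ hj he)
  · rw [hπdef, Finset.card_image_of_injOn, Finset.card_range]
    intro j hj j' hj' he
    exact hAinj j (Finset.mem_range.1 hj) j' (Finset.mem_range.1 hj') he

/-- Helper to provide a dominating witness by its value. -/
lemma dom_wit {n : ℕ} (hn3 : 3 ≤ n) (p : ℕ → Prop) (v : Fin n) (w : ℕ) (hw : w < n)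
    (hp : p w)
    (hadj : w = v.val ∨ w + 1 = v.val ∨ v.val + 1 = w ∨ (w = 0 ∧ v.val = n - 1) ∨
      (v.val = 0 ∧ w = n - 1)) :
    ∃ u : Fin n, p u.val ∧ (u = v ∨ (cycleGraph n).Adj u v) := by
  refine ⟨⟨w, hw⟩, hp, ?_⟩
  have hval : ((⟨w, hw⟩ : Fin n) : ℕ) = w := rfl
  rcases hadj with h | h
  · exact Or.inl (Fin.ext (by omega))
  · right
    rw [adj_iff hn3]
    omega

/-- Helper to provide a non-dominated witness by its value. -/
lemma notdom_wit {n : ℕ} (hn3 : 3 ≤ n) (p : ℕ → Prop) (w : ℕ) (hw : w < n)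
    (h : ∀ x : ℕ, x < n → p x →
      ¬ (x = w ∨ x + 1 = w ∨ w + 1 = x ∨ (x = 0 ∧ w = n - 1) ∨ (w = 0 ∧ x = n - 1))) :
    ∃ wf : Fin n, ∀ u : Fin n, p u.val → ¬ (u = wf ∨ (cycleGraph n).Adj u wf) := by
  refine ⟨⟨w, hw⟩, fun u hu hc => h u.val u.isLt hu ?_⟩
  have hval : ((⟨w, hw⟩ : Fin n) : ℕ) = w := rfl
  rcases hc with rfl | hadj
  · exact Or.inl rfl
  · rw [adj_iff hn3] at hadj
    omega

def pairB : ℕ → ℕ := fun j =>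
  match j with | 0 => 1 | 1 => 0 | 2 => 1 | 3 => 4 | 4 => 3 | _ => 4
def pairA : ℕ → ℕ := fun j =>
  match j with | 0 => 3 | 1 => 4 | 2 => 5 | 3 => 0 | 4 => 1 | _ => 2

/-- Coloring for `n ≡ 1 (mod 3)`. -/
def F1 : ℕ → ℕ := fun v =>
  if v = 0 then 1 else if v = 1 then 4 else if v = 2 then 1 else if v = 3 then 4
  else if v = 4 then 0 else if v = 5 then 2 else if v = 6 then 4
  else if v % 3 = 1 then 1 else if v % 3 = 2 then 5 else 3

lemma hF1_0 : ∀ x, F1 x = 0 ↔ x = 4 := by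
  intro x; unfold F1; split_ifs <;> (try simp) <;> omega
lemma hF1_1 : ∀ x, F1 x = 1 ↔ (x = 0 ∨ x = 2 ∨ (7 ≤ x ∧ x % 3 = 1)) := by
  intro x; unfold F1; split_ifs <;> (try simp) <;> omega
lemma hF1_2 : ∀ x, F1 x = 2 ↔ x = 5 := by
  intro x; unfold F1; split_ifs <;> (try simp) <;> omega
lemma hF1_3 : ∀ x, F1 x = 3 ↔ (7 ≤ x ∧ x % 3 = 0) := by
  intro x; unfold F1; split_ifs <;> (try simp) <;> omega
lemma hF1_4 : ∀ x, F1 x = 4 ↔ (x = 1 ∨ x = 3 ∨ x = 6) := by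
  intro x; unfold F1; split_ifs <;> (try simp) <;> omega
lemma hF1_5 : ∀ x, F1 x = 5 ↔ (7 ≤ x ∧ x % 3 = 2) := by
  intro x; unfold F1; split_ifs <;> (try simp) <;> omega

lemma icp_mod1 {n : ℕ} (hn : 10 ≤ n) (h3 : n % 3 = 1) :
    ∃ π : Finset (Finset (Fin n)), IsICPartition (cycleGraph n) π ∧ π.card = 6 := by
  have hn3 : 3 ≤ n := by omega
  have hind01 : ∀ u v : Fin n, (F1 u.val = 0 ∨ F1 u.val = 1) → (F1 v.val = 0 ∨ F1 v.val = 1) →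
      ¬ (cycleGraph n).Adj u v := by
    intro u v hu hv
    rw [hF1_0, hF1_1] at hu hv
    rw [adj_iff hn3]
    omega
  have hind21 : ∀ u v : Fin n, (F1 u.val = 2 ∨ F1 u.val = 1) → (F1 v.val = 2 ∨ F1 v.val = 1) →
      ¬ (cycleGraph n).Adj u v := by
    intro u v hu hv
    rw [hF1_2, hF1_1] at hu hv
    rw [adj_iff hn3]
    omega
  have hind34 : ∀ u v : Fin n, (F1 u.val = 3 ∨ F1 u.val = 4) → (F1 v.val = 3 ∨ F1 v.val = 4) →
      ¬ (cycleGraph n).Adj u v := by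
    intro u v hu hv
    rw [hF1_3, hF1_4] at hu hv
    rw [adj_iff hn3]
    omega
  have hind54 : ∀ u v : Fin n, (F1 u.val = 5 ∨ F1 u.val = 4) → (F1 v.val = 5 ∨ F1 v.val = 4) →
      ¬ (cycleGraph n).Adj u v := by
    intro u v hu hv
    rw [hF1_5, hF1_4] at hu hv
    rw [adj_iff hn3]
    omega
  have hdom01 : ∀ v : Fin n, ∃ u : Fin n, (F1 u.val = 0 ∨ F1 u.val = 1) ∧
      (u = v ∨ (cycleGraph n).Adj u v) := by
    intro v
    have hv := v.isLt
    rcases (by omega : v.val ≤ 1 ∨ v.val = 2 ∨ v.val = 3 ∨ v.val = 4 ∨ v.val = 5 ∨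
        v.val = 6 ∨ (7 ≤ v.val ∧ v.val % 3 = 1) ∨ (7 ≤ v.val ∧ v.val % 3 = 2) ∨
        (7 ≤ v.val ∧ v.val % 3 = 0 ∧ v.val = n - 1) ∨
        (7 ≤ v.val ∧ v.val % 3 = 0 ∧ v.val < n - 1))
      with h | h | h | h | h | h | h | h | h | h
    · exact dom_wit hn3 (fun x => F1 x = 0 ∨ F1 x = 1) v 0 (by omega)
        (by simp only [hF1_0, hF1_1]; first | omega | simp | (simp; omega)) (by omega)
    · exact dom_wit hn3 (fun x => F1 x = 0 ∨ F1 x = 1) v 2 (by omega)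
        (by simp only [hF1_0, hF1_1]; first | omega | simp | (simp; omega)) (by omega)
    · exact dom_wit hn3 (fun x => F1 x = 0 ∨ F1 x = 1) v 2 (by omega)
        (by simp only [hF1_0, hF1_1]; first | omega | simp | (simp; omega)) (by omega)
    · exact dom_wit hn3 (fun x => F1 x = 0 ∨ F1 x = 1) v 4 (by omega)
        (by simp only [hF1_0, hF1_1]; first | omega | simp | (simp; omega)) (by omega)
    · exact dom_wit hn3 (fun x => F1 x = 0 ∨ F1 x = 1) v 4 (by omega)
        (by simp only [hF1_0, hF1_1]; first | omega | simp | (simp; omega)) (by omega)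
    · exact dom_wit hn3 (fun x => F1 x = 0 ∨ F1 x = 1) v 7 (by omega)
        (by simp only [hF1_0, hF1_1]; first | omega | simp | (simp; omega)) (by omega)
    · exact dom_wit hn3 (fun x => F1 x = 0 ∨ F1 x = 1) v v.val (by omega)
        (by simp only [hF1_0, hF1_1]; first | omega | simp | (simp; omega)) (by omega)
    · exact dom_wit hn3 (fun x => F1 x = 0 ∨ F1 x = 1) v (v.val - 1) (by omega)
        (by simp only [hF1_0, hF1_1]; first | omega | simp | (simp; omega)) (by omega)
    · exact dom_wit hn3 (fun x => F1 x = 0 ∨ F1 x = 1) v 0 (by omega)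
        (by simp only [hF1_0, hF1_1]; first | omega | simp | (simp; omega)) (by omega)
    · exact dom_wit hn3 (fun x => F1 x = 0 ∨ F1 x = 1) v (v.val + 1) (by omega)
        (by simp only [hF1_0, hF1_1]; first | omega | simp | (simp; omega)) (by omega)
  have hdom21 : ∀ v : Fin n, ∃ u : Fin n, (F1 u.val = 2 ∨ F1 u.val = 1) ∧
      (u = v ∨ (cycleGraph n).Adj u v) := by
    intro v
    have hv := v.isLt
    rcases (by omega : v.val ≤ 1 ∨ v.val = 2 ∨ v.val = 3 ∨ v.val = 4 ∨ v.val = 5 ∨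
        v.val = 6 ∨ (7 ≤ v.val ∧ v.val % 3 = 1) ∨ (7 ≤ v.val ∧ v.val % 3 = 2) ∨
        (7 ≤ v.val ∧ v.val % 3 = 0 ∧ v.val = n - 1) ∨
        (7 ≤ v.val ∧ v.val % 3 = 0 ∧ v.val < n - 1))
      with h | h | h | h | h | h | h | h | h | h
    · exact dom_wit hn3 (fun x => F1 x = 2 ∨ F1 x = 1) v 0 (by omega)
        (by simp only [hF1_2, hF1_1]; first | omega | simp | (simp; omega)) (by omega)
    · exact dom_wit hn3 (fun x => F1 x = 2 ∨ F1 x = 1) v 2 (by omega)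
        (by simp only [hF1_2, hF1_1]; first | omega | simp | (simp; omega)) (by omega)
    · exact dom_wit hn3 (fun x => F1 x = 2 ∨ F1 x = 1) v 2 (by omega)
        (by simp only [hF1_2, hF1_1]; first | omega | simp | (simp; omega)) (by omega)
    · exact dom_wit hn3 (fun x => F1 x = 2 ∨ F1 x = 1) v 5 (by omega)
        (by simp only [hF1_2, hF1_1]; first | omega | simp | (simp; omega)) (by omega)
    · exact dom_wit hn3 (fun x => F1 x = 2 ∨ F1 x = 1) v 5 (by omega)
        (by simp only [hF1_2, hF1_1]; first | omega | simp | (simp; omega)) (by omega)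
    · exact dom_wit hn3 (fun x => F1 x = 2 ∨ F1 x = 1) v 5 (by omega)
        (by simp only [hF1_2, hF1_1]; first | omega | simp | (simp; omega)) (by omega)
    · exact dom_wit hn3 (fun x => F1 x = 2 ∨ F1 x = 1) v v.val (by omega)
        (by simp only [hF1_2, hF1_1]; first | omega | simp | (simp; omega)) (by omega)
    · exact dom_wit hn3 (fun x => F1 x = 2 ∨ F1 x = 1) v (v.val - 1) (by omega)
        (by simp only [hF1_2, hF1_1]; first | omega | simp | (simp; omega)) (by omega)
    · exact dom_wit hn3 (fun x => F1 x = 2 ∨ F1 x = 1) v 0 (by omega)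
        (by simp only [hF1_2, hF1_1]; first | omega | simp | (simp; omega)) (by omega)
    · exact dom_wit hn3 (fun x => F1 x = 2 ∨ F1 x = 1) v (v.val + 1) (by omega)
        (by simp only [hF1_2, hF1_1]; first | omega | simp | (simp; omega)) (by omega)
  have hdom34 : ∀ v : Fin n, ∃ u : Fin n, (F1 u.val = 3 ∨ F1 u.val = 4) ∧
      (u = v ∨ (cycleGraph n).Adj u v) := by
    intro v
    have hv := v.isLt
    rcases (by omega : v.val ≤ 2 ∨ v.val = 3 ∨ v.val = 4 ∨ v.val = 5 ∨ v.val = 6 ∨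
        v.val = 7 ∨ (8 ≤ v.val ∧ v.val % 3 = 0) ∨ (8 ≤ v.val ∧ v.val % 3 = 1) ∨
        (8 ≤ v.val ∧ v.val % 3 = 2))
      with h | h | h | h | h | h | h | h | h
    · exact dom_wit hn3 (fun x => F1 x = 3 ∨ F1 x = 4) v 1 (by omega)
        (by simp only [hF1_3, hF1_4]; first | omega | simp | (simp; omega)) (by omega)
    · exact dom_wit hn3 (fun x => F1 x = 3 ∨ F1 x = 4) v 3 (by omega)
        (by simp only [hF1_3, hF1_4]; first | omega | simp | (simp; omega)) (by omega)
    · exact dom_wit hn3 (fun x => F1 x = 3 ∨ F1 x = 4) v 3 (by omega)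
        (by simp only [hF1_3, hF1_4]; first | omega | simp | (simp; omega)) (by omega)
    · exact dom_wit hn3 (fun x => F1 x = 3 ∨ F1 x = 4) v 6 (by omega)
        (by simp only [hF1_3, hF1_4]; first | omega | simp | (simp; omega)) (by omega)
    · exact dom_wit hn3 (fun x => F1 x = 3 ∨ F1 x = 4) v 6 (by omega)
        (by simp only [hF1_3, hF1_4]; first | omega | simp | (simp; omega)) (by omega)
    · exact dom_wit hn3 (fun x => F1 x = 3 ∨ F1 x = 4) v 6 (by omega)
        (by simp only [hF1_3, hF1_4]; first | omega | simp | (simp; omega)) (by omega)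
    · exact dom_wit hn3 (fun x => F1 x = 3 ∨ F1 x = 4) v v.val (by omega)
        (by simp only [hF1_3, hF1_4]; first | omega | simp | (simp; omega)) (by omega)
    · exact dom_wit hn3 (fun x => F1 x = 3 ∨ F1 x = 4) v (v.val - 1) (by omega)
        (by simp only [hF1_3, hF1_4]; first | omega | simp | (simp; omega)) (by omega)
    · exact dom_wit hn3 (fun x => F1 x = 3 ∨ F1 x = 4) v (v.val + 1) (by omega)
        (by simp only [hF1_3, hF1_4]; first | omega | simp | (simp; omega)) (by omega)
  have hdom54 : ∀ v : Fin n, ∃ u : Fin n, (F1 u.val = 5 ∨ F1 u.val = 4) ∧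
      (u = v ∨ (cycleGraph n).Adj u v) := by
    intro v
    have hv := v.isLt
    rcases (by omega : v.val ≤ 2 ∨ v.val = 3 ∨ v.val = 4 ∨ v.val = 5 ∨ v.val = 6 ∨
        v.val = 7 ∨ (8 ≤ v.val ∧ v.val % 3 = 2) ∨ (8 ≤ v.val ∧ v.val % 3 = 1) ∨
        (8 ≤ v.val ∧ v.val % 3 = 0))
      with h | h | h | h | h | h | h | h | h
    · exact dom_wit hn3 (fun x => F1 x = 5 ∨ F1 x = 4) v 1 (by omega)
        (by simp only [hF1_5, hF1_4]; first | omega | simp | (simp; omega)) (by omega)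
    · exact dom_wit hn3 (fun x => F1 x = 5 ∨ F1 x = 4) v 3 (by omega)
        (by simp only [hF1_5, hF1_4]; first | omega | simp | (simp; omega)) (by omega)
    · exact dom_wit hn3 (fun x => F1 x = 5 ∨ F1 x = 4) v 3 (by omega)
        (by simp only [hF1_5, hF1_4]; first | omega | simp | (simp; omega)) (by omega)
    · exact dom_wit hn3 (fun x => F1 x = 5 ∨ F1 x = 4) v 6 (by omega)
        (by simp only [hF1_5, hF1_4]; first | omega | simp | (simp; omega)) (by omega)
    · exact dom_wit hn3 (fun x => F1 x = 5 ∨ F1 x = 4) v 6 (by omega)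
        (by simp only [hF1_5, hF1_4]; first | omega | simp | (simp; omega)) (by omega)
    · exact dom_wit hn3 (fun x => F1 x = 5 ∨ F1 x = 4) v 6 (by omega)
        (by simp only [hF1_5, hF1_4]; first | omega | simp | (simp; omega)) (by omega)
    · exact dom_wit hn3 (fun x => F1 x = 5 ∨ F1 x = 4) v v.val (by omega)
        (by simp only [hF1_5, hF1_4]; first | omega | simp | (simp; omega)) (by omega)
    · exact dom_wit hn3 (fun x => F1 x = 5 ∨ F1 x = 4) v (v.val + 1) (by omega)
        (by simp only [hF1_5, hF1_4]; first | omega | simp | (simp; omega)) (by omega)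
    · exact dom_wit hn3 (fun x => F1 x = 5 ∨ F1 x = 4) v (v.val - 1) (by omega)
        (by simp only [hF1_5, hF1_4]; first | omega | simp | (simp; omega)) (by omega)
  refine build_icp (fun v : Fin n => F1 v.val) pairB ?_ ?_ ?_ ?_ ?_ ?_
  · intro j hj
    interval_cases j <;> exact ⟨by decide, by decide⟩
  · intro v
    show F1 v.val < 6
    unfold F1
    split_ifs <;> omega
  · intro j hj
    interval_cases j
    · exact ⟨⟨4, by omega⟩, (hF1_0 4).2 (by omega)⟩
    · exact ⟨⟨0, by omega⟩, (hF1_1 0).2 (by omega)⟩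
    · exact ⟨⟨5, by omega⟩, (hF1_2 5).2 (by omega)⟩
    · exact ⟨⟨9, by omega⟩, (hF1_3 9).2 (by omega)⟩
    · exact ⟨⟨1, by omega⟩, (hF1_4 1).2 (by omega)⟩
    · exact ⟨⟨8, by omega⟩, (hF1_5 8).2 (by omega)⟩
  · intro j hj
    interval_cases j
    · exact hind01
    · exact fun u v hu hv => hind01 u v hu.symm hv.symm
    · exact hind21
    · exact hind34
    · exact fun u v hu hv => hind34 u v hu.symm hv.symm
    · exact hind54
  · intro j hj
    interval_cases j
    · exact hdom01
    · exact fun v => (hdom01 v).imp (fun u h => ⟨h.1.symm, h.2⟩)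
    · exact hdom21
    · exact hdom34
    · exact fun v => (hdom34 v).imp (fun u h => ⟨h.1.symm, h.2⟩)
    · exact hdom54
  · intro j hj
    interval_cases j
    · exact notdom_wit hn3 (fun x => F1 x = 0) 0 (by omega)
        (fun x hx hpx => by simp only [hF1_0] at hpx; omega)
    · exact notdom_wit hn3 (fun x => F1 x = 1) 4 (by omega)
        (fun x hx hpx => by simp only [hF1_1] at hpx; omega)
    · exact notdom_wit hn3 (fun x => F1 x = 2) 0 (by omega)
        (fun x hx hpx => by simp only [hF1_2] at hpx; omega)
    · exact notdom_wit hn3 (fun x => F1 x = 3) 1 (by omega)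
        (fun x hx hpx => by simp only [hF1_3] at hpx; omega)
    · exact notdom_wit hn3 (fun x => F1 x = 4) 8 (by omega)
        (fun x hx hpx => by simp only [hF1_4] at hpx; omega)
    · exact notdom_wit hn3 (fun x => F1 x = 5) 1 (by omega)
        (fun x hx hpx => by simp only [hF1_5] at hpx; omega)

/-- Coloring for `n ≡ 0 (mod 3)`. -/
def F0 : ℕ → ℕ := fun v => if v < 3 then v else 3 + v % 3

lemma hF0_0 : ∀ x, F0 x = 0 ↔ x = 0 := by
  intro x; unfold F0; split_ifs <;> (try simp) <;> omega
lemma hF0_1 : ∀ x, F0 x = 1 ↔ x = 1 := by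
  intro x; unfold F0; split_ifs <;> (try simp) <;> omega
lemma hF0_2 : ∀ x, F0 x = 2 ↔ x = 2 := by
  intro x; unfold F0; split_ifs <;> (try simp) <;> omega
lemma hF0_3 : ∀ x, F0 x = 3 ↔ (3 ≤ x ∧ x % 3 = 0) := by
  intro x; unfold F0; split_ifs <;> (try simp) <;> omega
lemma hF0_4 : ∀ x, F0 x = 4 ↔ (3 ≤ x ∧ x % 3 = 1) := by
  intro x; unfold F0; split_ifs <;> (try simp) <;> omega
lemma hF0_5 : ∀ x, F0 x = 5 ↔ (3 ≤ x ∧ x % 3 = 2) := by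
  intro x; unfold F0; split_ifs <;> (try simp) <;> omega

lemma icp_mod0 {n : ℕ} (hn : 9 ≤ n) (h3 : n % 3 = 0) :
    ∃ π : Finset (Finset (Fin n)), IsICPartition (cycleGraph n) π ∧ π.card = 6 := by
  have hn3 : 3 ≤ n := by omega
  have hind03 : ∀ u v : Fin n, (F0 u.val = 0 ∨ F0 u.val = 3) → (F0 v.val = 0 ∨ F0 v.val = 3) →
      ¬ (cycleGraph n).Adj u v := by
    intro u v hu hv
    rw [hF0_0, hF0_3] at hu hv
    rw [adj_iff hn3]
    omega
  have hind14 : ∀ u v : Fin n, (F0 u.val = 1 ∨ F0 u.val = 4) → (F0 v.val = 1 ∨ F0 v.val = 4) →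
      ¬ (cycleGraph n).Adj u v := by
    intro u v hu hv
    rw [hF0_1, hF0_4] at hu hv
    rw [adj_iff hn3]
    omega
  have hind25 : ∀ u v : Fin n, (F0 u.val = 2 ∨ F0 u.val = 5) → (F0 v.val = 2 ∨ F0 v.val = 5) →
      ¬ (cycleGraph n).Adj u v := by
    intro u v hu hv
    rw [hF0_2, hF0_5] at hu hv
    rw [adj_iff hn3]
    omega
  have hdom03 : ∀ v : Fin n, ∃ u : Fin n, (F0 u.val = 0 ∨ F0 u.val = 3) ∧
      (u = v ∨ (cycleGraph n).Adj u v) := by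
    intro v
    have hv := v.isLt
    rcases (by omega : v.val % 3 = 0 ∨ v.val % 3 = 1 ∨ (v.val % 3 = 2 ∧ v.val = n - 1) ∨
        (v.val % 3 = 2 ∧ v.val < n - 1)) with h | h | h | h
    · exact dom_wit hn3 (fun x => F0 x = 0 ∨ F0 x = 3) v v.val (by omega)
        (by simp only [hF0_0, hF0_3]; first | omega | simp | (simp; omega)) (by omega)
    · exact dom_wit hn3 (fun x => F0 x = 0 ∨ F0 x = 3) v (v.val - 1) (by omega)
        (by simp only [hF0_0, hF0_3]; first | omega | simp | (simp; omega)) (by omega)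
    · exact dom_wit hn3 (fun x => F0 x = 0 ∨ F0 x = 3) v 0 (by omega)
        (by simp only [hF0_0, hF0_3]; first | omega | simp | (simp; omega)) (by omega)
    · exact dom_wit hn3 (fun x => F0 x = 0 ∨ F0 x = 3) v (v.val + 1) (by omega)
        (by simp only [hF0_0, hF0_3]; first | omega | simp | (simp; omega)) (by omega)
  have hdom14 : ∀ v : Fin n, ∃ u : Fin n, (F0 u.val = 1 ∨ F0 u.val = 4) ∧
      (u = v ∨ (cycleGraph n).Adj u v) := by
    intro v
    have hv := v.isLt
    rcases (by omega : v.val % 3 = 1 ∨ v.val % 3 = 2 ∨ v.val = 0 ∨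
        (v.val % 3 = 0 ∧ 3 ≤ v.val)) with h | h | h | h
    · exact dom_wit hn3 (fun x => F0 x = 1 ∨ F0 x = 4) v v.val (by omega)
        (by simp only [hF0_1, hF0_4]; first | omega | simp | (simp; omega)) (by omega)
    · exact dom_wit hn3 (fun x => F0 x = 1 ∨ F0 x = 4) v (v.val - 1) (by omega)
        (by simp only [hF0_1, hF0_4]; first | omega | simp | (simp; omega)) (by omega)
    · exact dom_wit hn3 (fun x => F0 x = 1 ∨ F0 x = 4) v 1 (by omega)
        (by simp only [hF0_1, hF0_4]; first | omega | simp | (simp; omega)) (by omega)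
    · exact dom_wit hn3 (fun x => F0 x = 1 ∨ F0 x = 4) v (v.val + 1) (by omega)
        (by simp only [hF0_1, hF0_4]; first | omega | simp | (simp; omega)) (by omega)
  have hdom25 : ∀ v : Fin n, ∃ u : Fin n, (F0 u.val = 2 ∨ F0 u.val = 5) ∧
      (u = v ∨ (cycleGraph n).Adj u v) := by
    intro v
    have hv := v.isLt
    rcases (by omega : v.val % 3 = 2 ∨ v.val % 3 = 1 ∨ v.val = 0 ∨
        (v.val % 3 = 0 ∧ 3 ≤ v.val)) with h | h | h | h
    · exact dom_wit hn3 (fun x => F0 x = 2 ∨ F0 x = 5) v v.val (by omega)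
        (by simp only [hF0_2, hF0_5]; first | omega | simp | (simp; omega)) (by omega)
    · exact dom_wit hn3 (fun x => F0 x = 2 ∨ F0 x = 5) v (v.val + 1) (by omega)
        (by simp only [hF0_2, hF0_5]; first | omega | simp | (simp; omega)) (by omega)
    · exact dom_wit hn3 (fun x => F0 x = 2 ∨ F0 x = 5) v (n - 1) (by omega)
        (by simp only [hF0_2, hF0_5]; first | omega | simp | (simp; omega)) (by omega)
    · exact dom_wit hn3 (fun x => F0 x = 2 ∨ F0 x = 5) v (v.val - 1) (by omega)
        (by simp only [hF0_2, hF0_5]; first | omega | simp | (simp; omega)) (by omega)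
  refine build_icp (fun v : Fin n => F0 v.val) pairA ?_ ?_ ?_ ?_ ?_ ?_
  · intro j hj
    interval_cases j <;> exact ⟨by decide, by decide⟩
  · intro v
    show F0 v.val < 6
    unfold F0
    split_ifs <;> omega
  · intro j hj
    interval_cases j
    · exact ⟨⟨0, by omega⟩, (hF0_0 0).2 (by omega)⟩
    · exact ⟨⟨1, by omega⟩, (hF0_1 1).2 (by omega)⟩
    · exact ⟨⟨2, by omega⟩, (hF0_2 2).2 (by omega)⟩
    · exact ⟨⟨3, by omega⟩, (hF0_3 3).2 (by omega)⟩
    · exact ⟨⟨4, by omega⟩, (hF0_4 4).2 (by omega)⟩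
    · exact ⟨⟨5, by omega⟩, (hF0_5 5).2 (by omega)⟩
  · intro j hj
    interval_cases j
    · exact hind03
    · exact hind14
    · exact hind25
    · exact fun u v hu hv => hind03 u v hu.symm hv.symm
    · exact fun u v hu hv => hind14 u v hu.symm hv.symm
    · exact fun u v hu hv => hind25 u v hu.symm hv.symm
  · intro j hj
    interval_cases j
    · exact hdom03
    · exact hdom14
    · exact hdom25
    · exact fun v => (hdom03 v).imp (fun u h => ⟨h.1.symm, h.2⟩)
    · exact fun v => (hdom14 v).imp (fun u h => ⟨h.1.symm, h.2⟩)
    · exact fun v => (hdom25 v).imp (fun u h => ⟨h.1.symm, h.2⟩)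
  · intro j hj
    interval_cases j
    · exact notdom_wit hn3 (fun x => F0 x = 0) 3 (by omega)
        (fun x hx hpx => by simp only [hF0_0] at hpx; omega)
    · exact notdom_wit hn3 (fun x => F0 x = 1) 4 (by omega)
        (fun x hx hpx => by simp only [hF0_1] at hpx; omega)
    · exact notdom_wit hn3 (fun x => F0 x = 2) 5 (by omega)
        (fun x hx hpx => by simp only [hF0_2] at hpx; omega)
    · exact notdom_wit hn3 (fun x => F0 x = 3) 0 (by omega)
        (fun x hx hpx => by simp only [hF0_3] at hpx; omega)
    · exact notdom_wit hn3 (fun x => F0 x = 4) 1 (by omega)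
        (fun x hx hpx => by simp only [hF0_4] at hpx; omega)
    · exact notdom_wit hn3 (fun x => F0 x = 5) 2 (by omega)
        (fun x hx hpx => by simp only [hF0_5] at hpx; omega)

/-- Coloring for `n ≡ 2 (mod 3)`. -/
def F2 : ℕ → ℕ := fun v =>
  if v = 0 then 1 else if v = 1 then 4 else if v = 2 then 0 else if v = 3 then 2
  else if v = 4 then 4 else if v % 3 = 2 then 1 else if v % 3 = 1 then 3 else 5

lemma hF2_0 : ∀ x, F2 x = 0 ↔ x = 2 := by intro x; unfold F2; split_ifs <;> (try simp) <;> omega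
lemma hF2_1 : ∀ x, F2 x = 1 ↔ (x = 0 ∨ (5 ≤ x ∧ x % 3 = 2)) := by
  intro x; unfold F2; split_ifs <;> (try simp) <;> omega
lemma hF2_2 : ∀ x, F2 x = 2 ↔ x = 3 := by intro x; unfold F2; split_ifs <;> (try simp) <;> omega
lemma hF2_3 : ∀ x, F2 x = 3 ↔ (5 ≤ x ∧ x % 3 = 1) := by
  intro x; unfold F2; split_ifs <;> (try simp) <;> omega
lemma hF2_4 : ∀ x, F2 x = 4 ↔ (x = 1 ∨ x = 4) := by intro x; unfold F2; split_ifs <;> (try simp) <;> omega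
lemma hF2_5 : ∀ x, F2 x = 5 ↔ (5 ≤ x ∧ x % 3 = 0) := by
  intro x; unfold F2; split_ifs <;> (try simp) <;> omega

lemma icp_mod2 {n : ℕ} (hn : 8 ≤ n) (h3 : n % 3 = 2) :
    ∃ π : Finset (Finset (Fin n)), IsICPartition (cycleGraph n) π ∧ π.card = 6 := by
  have hn3 : 3 ≤ n := by omega
  -- independence of the four unions
  have hind01 : ∀ u v : Fin n, (F2 u.val = 0 ∨ F2 u.val = 1) → (F2 v.val = 0 ∨ F2 v.val = 1) →
      ¬ (cycleGraph n).Adj u v := by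
    intro u v hu hv
    rw [hF2_0, hF2_1] at hu hv
    rw [adj_iff hn3]
    omega
  have hind21 : ∀ u v : Fin n, (F2 u.val = 2 ∨ F2 u.val = 1) → (F2 v.val = 2 ∨ F2 v.val = 1) →
      ¬ (cycleGraph n).Adj u v := by
    intro u v hu hv
    rw [hF2_2, hF2_1] at hu hv
    rw [adj_iff hn3]
    omega
  have hind34 : ∀ u v : Fin n, (F2 u.val = 3 ∨ F2 u.val = 4) → (F2 v.val = 3 ∨ F2 v.val = 4) →
      ¬ (cycleGraph n).Adj u v := by
    intro u v hu hv
    rw [hF2_3, hF2_4] at hu hv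
    rw [adj_iff hn3]
    omega
  have hind54 : ∀ u v : Fin n, (F2 u.val = 5 ∨ F2 u.val = 4) → (F2 v.val = 5 ∨ F2 v.val = 4) →
      ¬ (cycleGraph n).Adj u v := by
    intro u v hu hv
    rw [hF2_5, hF2_4] at hu hv
    rw [adj_iff hn3]
    omega
  -- domination of the four unions
  have hdom01 : ∀ v : Fin n, ∃ u : Fin n, (F2 u.val = 0 ∨ F2 u.val = 1) ∧
      (u = v ∨ (cycleGraph n).Adj u v) := by
    intro v
    have hv := v.isLt
    rcases (by omega : v.val ≤ 1 ∨ v.val = 2 ∨ v.val = 3 ∨ v.val = 4 ∨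
        (5 ≤ v.val ∧ v.val % 3 = 2) ∨ (5 ≤ v.val ∧ v.val % 3 = 1 ∧ v.val = n - 1) ∨
        (5 ≤ v.val ∧ v.val % 3 = 1 ∧ v.val < n - 1) ∨ (5 ≤ v.val ∧ v.val % 3 = 0))
      with h | h | h | h | h | h | h | h
    · exact dom_wit hn3 (fun x => F2 x = 0 ∨ F2 x = 1) v 0 (by omega) (by simp only [hF2_0, hF2_1]; first | omega | simp | (simp; omega)) (by omega)
    · exact dom_wit hn3 (fun x => F2 x = 0 ∨ F2 x = 1) v 2 (by omega) (by simp only [hF2_0, hF2_1]; first | omega | simp | (simp; omega)) (by omega)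
    · exact dom_wit hn3 (fun x => F2 x = 0 ∨ F2 x = 1) v 2 (by omega) (by simp only [hF2_0, hF2_1]; first | omega | simp | (simp; omega)) (by omega)
    · exact dom_wit hn3 (fun x => F2 x = 0 ∨ F2 x = 1) v 5 (by omega) (by simp only [hF2_0, hF2_1]; first | omega | simp | (simp; omega)) (by omega)
    · exact dom_wit hn3 (fun x => F2 x = 0 ∨ F2 x = 1) v v.val (by omega) (by simp only [hF2_0, hF2_1]; first | omega | simp | (simp; omega)) (by omega)
    · exact dom_wit hn3 (fun x => F2 x = 0 ∨ F2 x = 1) v 0 (by omega) (by simp only [hF2_0, hF2_1]; first | omega | simp | (simp; omega)) (by omega)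
    · exact dom_wit hn3 (fun x => F2 x = 0 ∨ F2 x = 1) v (v.val + 1) (by omega) (by simp only [hF2_0, hF2_1]; first | omega | simp | (simp; omega)) (by omega)
    · exact dom_wit hn3 (fun x => F2 x = 0 ∨ F2 x = 1) v (v.val - 1) (by omega) (by simp only [hF2_0, hF2_1]; first | omega | simp | (simp; omega)) (by omega)
  have hdom21 : ∀ v : Fin n, ∃ u : Fin n, (F2 u.val = 2 ∨ F2 u.val = 1) ∧
      (u = v ∨ (cycleGraph n).Adj u v) := by
    intro v
    have hv := v.isLt
    rcases (by omega : v.val ≤ 1 ∨ v.val = 2 ∨ v.val = 3 ∨ v.val = 4 ∨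
        (5 ≤ v.val ∧ v.val % 3 = 2) ∨ (5 ≤ v.val ∧ v.val % 3 = 1 ∧ v.val = n - 1) ∨
        (5 ≤ v.val ∧ v.val % 3 = 1 ∧ v.val < n - 1) ∨ (5 ≤ v.val ∧ v.val % 3 = 0))
      with h | h | h | h | h | h | h | h
    · exact dom_wit hn3 (fun x => F2 x = 2 ∨ F2 x = 1) v 0 (by omega) (by simp only [hF2_2, hF2_1]; first | omega | simp | (simp; omega)) (by omega)
    · exact dom_wit hn3 (fun x => F2 x = 2 ∨ F2 x = 1) v 3 (by omega) (by simp only [hF2_2, hF2_1]; first | omega | simp | (simp; omega)) (by omega)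
    · exact dom_wit hn3 (fun x => F2 x = 2 ∨ F2 x = 1) v 3 (by omega) (by simp only [hF2_2, hF2_1]; first | omega | simp | (simp; omega)) (by omega)
    · exact dom_wit hn3 (fun x => F2 x = 2 ∨ F2 x = 1) v 3 (by omega) (by simp only [hF2_2, hF2_1]; first | omega | simp | (simp; omega)) (by omega)
    · exact dom_wit hn3 (fun x => F2 x = 2 ∨ F2 x = 1) v v.val (by omega) (by simp only [hF2_2, hF2_1]; first | omega | simp | (simp; omega)) (by omega)
    · exact dom_wit hn3 (fun x => F2 x = 2 ∨ F2 x = 1) v 0 (by omega) (by simp only [hF2_2, hF2_1]; first | omega | simp | (simp; omega)) (by omega)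
    · exact dom_wit hn3 (fun x => F2 x = 2 ∨ F2 x = 1) v (v.val + 1) (by omega) (by simp only [hF2_2, hF2_1]; first | omega | simp | (simp; omega)) (by omega)
    · exact dom_wit hn3 (fun x => F2 x = 2 ∨ F2 x = 1) v (v.val - 1) (by omega) (by simp only [hF2_2, hF2_1]; first | omega | simp | (simp; omega)) (by omega)
  have hdom34 : ∀ v : Fin n, ∃ u : Fin n, (F2 u.val = 3 ∨ F2 u.val = 4) ∧
      (u = v ∨ (cycleGraph n).Adj u v) := by
    intro v
    have hv := v.isLt
    rcases (by omega : v.val ≤ 2 ∨ v.val = 3 ∨ v.val = 4 ∨ v.val = 5 ∨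
        (6 ≤ v.val ∧ v.val % 3 = 1) ∨ (6 ≤ v.val ∧ v.val % 3 = 0) ∨
        (6 ≤ v.val ∧ v.val % 3 = 2)) with h | h | h | h | h | h | h
    · exact dom_wit hn3 (fun x => F2 x = 3 ∨ F2 x = 4) v 1 (by omega) (by simp only [hF2_3, hF2_4]; first | omega | simp | (simp; omega)) (by omega)
    · exact dom_wit hn3 (fun x => F2 x = 3 ∨ F2 x = 4) v 4 (by omega) (by simp only [hF2_3, hF2_4]; first | omega | simp | (simp; omega)) (by omega)
    · exact dom_wit hn3 (fun x => F2 x = 3 ∨ F2 x = 4) v 4 (by omega) (by simp only [hF2_3, hF2_4]; first | omega | simp | (simp; omega)) (by omega)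
    · exact dom_wit hn3 (fun x => F2 x = 3 ∨ F2 x = 4) v 4 (by omega) (by simp only [hF2_3, hF2_4]; first | omega | simp | (simp; omega)) (by omega)
    · exact dom_wit hn3 (fun x => F2 x = 3 ∨ F2 x = 4) v v.val (by omega) (by simp only [hF2_3, hF2_4]; first | omega | simp | (simp; omega)) (by omega)
    · exact dom_wit hn3 (fun x => F2 x = 3 ∨ F2 x = 4) v (v.val + 1) (by omega) (by simp only [hF2_3, hF2_4]; first | omega | simp | (simp; omega)) (by omega)
    · exact dom_wit hn3 (fun x => F2 x = 3 ∨ F2 x = 4) v (v.val - 1) (by omega) (by simp only [hF2_3, hF2_4]; first | omega | simp | (simp; omega)) (by omega)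
  have hdom54 : ∀ v : Fin n, ∃ u : Fin n, (F2 u.val = 5 ∨ F2 u.val = 4) ∧
      (u = v ∨ (cycleGraph n).Adj u v) := by
    intro v
    have hv := v.isLt
    rcases (by omega : v.val ≤ 2 ∨ v.val = 3 ∨ v.val = 4 ∨ v.val = 5 ∨
        (6 ≤ v.val ∧ v.val % 3 = 0) ∨ (6 ≤ v.val ∧ v.val % 3 = 2) ∨
        (6 ≤ v.val ∧ v.val % 3 = 1)) with h | h | h | h | h | h | h
    · exact dom_wit hn3 (fun x => F2 x = 5 ∨ F2 x = 4) v 1 (by omega) (by simp only [hF2_5, hF2_4]; first | omega | simp | (simp; omega)) (by omega)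
    · exact dom_wit hn3 (fun x => F2 x = 5 ∨ F2 x = 4) v 4 (by omega) (by simp only [hF2_5, hF2_4]; first | omega | simp | (simp; omega)) (by omega)
    · exact dom_wit hn3 (fun x => F2 x = 5 ∨ F2 x = 4) v 4 (by omega) (by simp only [hF2_5, hF2_4]; first | omega | simp | (simp; omega)) (by omega)
    · exact dom_wit hn3 (fun x => F2 x = 5 ∨ F2 x = 4) v 4 (by omega) (by simp only [hF2_5, hF2_4]; first | omega | simp | (simp; omega)) (by omega)
    · exact dom_wit hn3 (fun x => F2 x = 5 ∨ F2 x = 4) v v.val (by omega) (by simp only [hF2_5, hF2_4]; first | omega | simp | (simp; omega)) (by omega)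
    · exact dom_wit hn3 (fun x => F2 x = 5 ∨ F2 x = 4) v (v.val + 1) (by omega) (by simp only [hF2_5, hF2_4]; first | omega | simp | (simp; omega)) (by omega)
    · exact dom_wit hn3 (fun x => F2 x = 5 ∨ F2 x = 4) v (v.val - 1) (by omega) (by simp only [hF2_5, hF2_4]; first | omega | simp | (simp; omega)) (by omega)
  refine build_icp (fun v : Fin n => F2 v.val) pairB ?_ ?_ ?_ ?_ ?_ ?_
  · intro j hj
    interval_cases j <;> exact ⟨by decide, by decide⟩
  · intro v
    show F2 v.val < 6
    unfold F2
    split_ifs <;> omega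
  · intro j hj
    interval_cases j
    · exact ⟨⟨2, by omega⟩, (hF2_0 2).2 rfl⟩
    · exact ⟨⟨0, by omega⟩, (hF2_1 0).2 (by omega)⟩
    · exact ⟨⟨3, by omega⟩, (hF2_2 3).2 rfl⟩
    · exact ⟨⟨7, by omega⟩, (hF2_3 7).2 (by omega)⟩
    · exact ⟨⟨1, by omega⟩, (hF2_4 1).2 (by omega)⟩
    · exact ⟨⟨6, by omega⟩, (hF2_5 6).2 (by omega)⟩
  · intro j hj
    interval_cases j
    · exact hind01
    · exact fun u v hu hv => hind01 u v hu.symm hv.symm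
    · exact hind21
    · exact hind34
    · exact fun u v hu hv => hind34 u v hu.symm hv.symm
    · exact hind54
  · intro j hj
    interval_cases j
    · exact hdom01
    · exact fun v => (hdom01 v).imp (fun u h => ⟨h.1.symm, h.2⟩)
    · exact hdom21
    · exact hdom34
    · exact fun v => (hdom34 v).imp (fun u h => ⟨h.1.symm, h.2⟩)
    · exact hdom54
  · intro j hj
    interval_cases j
    · exact notdom_wit hn3 (fun x => F2 x = 0) 0 (by omega) (fun x hx hpx => by simp only [hF2_0] at hpx; omega)
    · exact notdom_wit hn3 (fun x => F2 x = 1) 2 (by omega) (fun x hx hpx => by simp only [hF2_1] at hpx; omega)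
    · exact notdom_wit hn3 (fun x => F2 x = 2) 0 (by omega) (fun x hx hpx => by simp only [hF2_2] at hpx; omega)
    · exact notdom_wit hn3 (fun x => F2 x = 3) 2 (by omega) (fun x hx hpx => by simp only [hF2_3] at hpx; omega)
    · exact notdom_wit hn3 (fun x => F2 x = 4) 6 (by omega) (fun x hx hpx => by simp only [hF2_4] at hpx; omega)
    · exact notdom_wit hn3 (fun x => F2 x = 5) 1 (by omega) (fun x hx hpx => by simp only [hF2_5] at hpx; omega)


theorem stmt_10 (n : ℕ) (hn : 3 ≤ n) :
    (n ≤ 6 → IC (SimpleGraph.cycleGraph n) = n) ∧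
    (n = 7 → IC (SimpleGraph.cycleGraph n) = 5) ∧
    (8 ≤ n → IC (SimpleGraph.cycleGraph n) = 6) := by
  refine ⟨?_, ?_, ?_⟩
  · intro h6
    interval_cases n
    · exact ic3
    · exact ic4
    · exact ic5
    · exact ic6
  · rintro rfl
    exact ic7
  · intro h8
    have hcons : ∃ π : Finset (Finset (Fin n)),
        IsICPartition (SimpleGraph.cycleGraph n) π ∧ π.card = 6 := by
      rcases (by omega : n % 3 = 0 ∨ n % 3 = 1 ∨ n % 3 = 2) with h | h | h
      · exact icp_mod0 (by omega) h
      · exact icp_mod1 (by omega) h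
      · exact icp_mod2 (by omega) h
    obtain ⟨π₀, h₀, hc⟩ := hcons
    exact IC_eq_of h₀ hc (fun π hπ => icp_card_le_six (by omega) hπ)

end ICNL
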